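/- Let N ≥ 3 and fix R ≥ 1. Then lim_{λ → 0⁺} λ^{-(N−2)/4} · (∫_{ℝ^N} |f(W_λ(x)) − f(V_R(λ,1)(x))|^{2N/(N+2)} dx)^{(N+2)/(2N)} = 0, where f(u) = |u|^{4/(N−2)}u and V_R(λ,1) is the truncated bubble with parameters λ₁ = λ, λ₂ = 1. -/

import Mathlib

open MeasureTheory Real Filter

noncomputable def groundW (N : ℕ) (x : EuclideanSpace ℝ (Fin N)) : ℝ :=
  (1 + ‖x‖ ^ 2 / ((N : ℝ) * ((N : ℝ) - 2))) ^ (-(((N : ℝ) - 2) / 2))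

noncomputable def fnl (N : ℕ) (u : ℝ) : ℝ :=
  |u| ^ ((4 : ℝ) / ((N : ℝ) - 2)) * u

/-- The rescaled ground state `W_λ`. -/
noncomputable def Wl (N : ℕ) (lam : ℝ) (x : EuclideanSpace ℝ (Fin N)) : ℝ :=
  lam ^ (-(((N : ℝ) - 2) / 2)) * groundW N (lam⁻¹ • x)

/-- The constant `ζ(λ₁, λ₂)`, equal to the value of `W_{λ₁}` on `|x| = R√(λ₁λ₂)`. -/
noncomputable def zeta (N : ℕ) (R l1 l2 : ℝ) : ℝ :=
  (l1 + R ^ 2 * l2 / ((N : ℝ) * ((N : ℝ) - 2))) ^ (-(((N : ℝ) - 2) / 2))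

/-- The truncated bubble `V_R(λ₁, λ₂)`. -/
noncomputable def VR (N : ℕ) (R l1 l2 : ℝ) (x : EuclideanSpace ℝ (Fin N)) : ℝ :=
  if ‖x‖ ≤ R * Real.sqrt (l1 * l2) then Wl N l1 x - zeta N R l1 l2 else 0

lemma rpow_sub_rpow_le {a b s : ℝ} (hb : 0 ≤ b) (hba : b ≤ a) (hs : 1 ≤ s) :
    a ^ s - b ^ s ≤ s * a ^ (s - 1) * (a - b) := by
  rcases eq_or_lt_of_le (hb.trans hba) with ha | ha
  · have hb0 : b = 0 := le_antisymm (by rw [← ha] at hba; exact hba) hb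
    simp [← ha, hb0, Real.zero_rpow (by linarith : s ≠ 0)]
  · set u : ℝ := b / a with hu
    have hu0 : 0 ≤ u := div_nonneg hb ha.le
    have hu1 : u ≤ 1 := (div_le_one ha).2 hba
    have hbu : b = a * u := by rw [hu]; field_simp
    have hbern : 1 + s * (u - 1) ≤ u ^ s := by
      have := one_add_mul_self_le_rpow_one_add (s := u - 1) (by linarith) hs
      simpa using this
    have hbs : b ^ s = a ^ s * u ^ s := by
      rw [hbu, Real.mul_rpow ha.le hu0]
    have has : a ^ s = a ^ (s - 1) * a := by
      rw [← Real.rpow_add_one ha.ne' (s - 1)]; ring_nf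
    have haspos : 0 ≤ a ^ (s - 1) := Real.rpow_nonneg ha.le _
    have h1 : a ^ s - b ^ s ≤ a ^ s * (s * (1 - u)) := by
      rw [hbs]
      have : 1 - u ^ s ≤ s * (1 - u) := by nlinarith
      nlinarith [Real.rpow_nonneg ha.le s]
    calc a ^ s - b ^ s ≤ a ^ s * (s * (1 - u)) := h1
      _ = s * a ^ (s - 1) * (a - b) := by rw [has, hbu]; ring

lemma fnl_of_nonneg (N : ℕ) (hN : 3 ≤ N) {u : ℝ} (hu : 0 ≤ u) :
    fnl N u = u ^ (((N:ℝ) + 2) / ((N:ℝ) - 2)) := by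
  have hn : (3:ℝ) ≤ (N:ℝ) := by exact_mod_cast hN
  have hn2 : (0:ℝ) < (N:ℝ) - 2 := by linarith
  rw [fnl]
  rcases eq_or_lt_of_le hu with h0 | h0
  · rw [← h0, Real.zero_rpow (by positivity : ((N:ℝ)+2)/((N:ℝ)-2) ≠ 0), mul_zero]
  · have he : ((N:ℝ)+2)/((N:ℝ)-2) = 4/((N:ℝ)-2) + 1 := by field_simp; ring
    rw [abs_of_pos h0, he, Real.rpow_add_one h0.ne']

lemma Wl_eq (N : ℕ) (hN : 3 ≤ N) {lam : ℝ} (hl : 0 < lam) (x : EuclideanSpace ℝ (Fin N)) :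
    Wl N lam x = (lam + ‖x‖^2/(lam*((N:ℝ)*((N:ℝ)-2)))) ^ (-(((N:ℝ)-2)/2)) := by
  have hn : (3:ℝ) ≤ (N:ℝ) := by exact_mod_cast hN
  have hn2 : (0:ℝ) < (N:ℝ) - 2 := by linarith
  have hμ0 : (0:ℝ) < (N:ℝ)*((N:ℝ)-2) := by nlinarith
  rw [Wl, groundW, norm_smul, Real.norm_eq_abs, abs_of_pos (inv_pos.2 hl)]
  have hL : lam + ‖x‖^2/(lam*((N:ℝ)*((N:ℝ)-2)))
      = lam * (1 + (lam⁻¹*‖x‖)^2/((N:ℝ)*((N:ℝ)-2))) := by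
    field_simp
  rw [hL, Real.mul_rpow hl.le (by positivity)]

lemma zeta_eq (N : ℕ) (R lam : ℝ) :
    zeta N R lam 1 = (lam + R^2/((N:ℝ)*((N:ℝ)-2))) ^ (-(((N:ℝ)-2)/2)) := by
  rw [zeta, mul_one]

set_option maxHeartbeats 2000000 in
lemma pointwise_bound (N : ℕ) (hN : 3 ≤ N) (R : ℝ) (hR : 1 ≤ R) {lam : ℝ}
    (hl : 0 < lam) (hl1 : lam ≤ 1) (x : EuclideanSpace ℝ (Fin N)) :
    |fnl N (Wl N lam x) - fnl N (VR N R lam 1 x)| ≤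
      5 * ((N:ℝ)*((N:ℝ)-2)) ^ (((N:ℝ)+2)/2) * (1+R^2) ^ (max 2 (((N:ℝ)+4)/4)) *
        (lam + ‖x‖^2 / (lam * ((N:ℝ)*((N:ℝ)-2)))) ^ (-(max 2 (((N:ℝ)+4)/4))) := by
  have hn : (3:ℝ) ≤ (N:ℝ) := by exact_mod_cast hN
  have hn2 : (0:ℝ) < (N:ℝ) - 2 := by linarith
  set n : ℝ := (N:ℝ) with hn_def
  set μ : ℝ := n * (n-2) with hmu_def
  have hμ3 : (3:ℝ) ≤ μ := by rw [hmu_def]; nlinarith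
  have hμ0 : (0:ℝ) < μ := by linarith
  set m : ℝ := (n-2)/2 with hm_def
  have hm0 : (0:ℝ) < m := by rw [hm_def]; linarith
  set s : ℝ := (n+2)/(n-2) with hs_def
  have hs1 : (1:ℝ) ≤ s := by rw [hs_def, le_div_iff₀ hn2]; linarith
  have hs5 : s ≤ 5 := by rw [hs_def, div_le_iff₀ hn2]; linarith
  set k : ℝ := max 2 ((n+4)/4) with hk_def
  have hk2 : (2:ℝ) ≤ k := le_max_left _ _
  have hkle : k ≤ (n+2)/2 := max_le (by linarith) (by linarith)
  set L : ℝ := lam + ‖x‖^2/(lam*μ) with hL_def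
  have hL0 : (0:ℝ) < L := by
    have : (0:ℝ) ≤ ‖x‖^2/(lam*μ) := by positivity
    rw [hL_def]; linarith
  have hms : m * s = (n+2)/2 := by rw [hm_def, hs_def]; field_simp
  have hms1 : m * (s-1) = 2 := by rw [hm_def, hs_def]; field_simp; ring
  have hWl : Wl N lam x = L ^ (-m) := Wl_eq N hN hl x
  have ha0 : (0:ℝ) < L ^ (-m) := Real.rpow_pos_of_pos hL0 _
  have hfa : fnl N (Wl N lam x) = (L ^ (-m)) ^ s := by
    rw [hWl, fnl_of_nonneg N hN ha0.le, hs_def]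
  have has : (L ^ (-m)) ^ s = L ^ (-(m*s)) := by
    rw [← Real.rpow_mul hL0.le]; ring_nf
  have hCk : (1:ℝ) ≤ 5 * (1+R^2)^k := by
    have h1 : (1:ℝ) ≤ (1+R^2)^k :=
      Real.one_le_rpow (by nlinarith) (by linarith)
    nlinarith
  have hμpow : (0:ℝ) < μ ^ ((n+2)/2) := Real.rpow_pos_of_pos hμ0 _
  have hLk : (0:ℝ) ≤ L ^ (-k) := (Real.rpow_pos_of_pos hL0 _).le
  by_cases hx : ‖x‖ ≤ R * Real.sqrt (lam * 1)
  · -- inner region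
    have hx2 : ‖x‖^2 ≤ R^2 * lam := by
      have h1 : ‖x‖^2 ≤ (R * Real.sqrt (lam*1))^2 := by
        apply sq_le_sq' _ hx
        have : (0:ℝ) ≤ R * Real.sqrt (lam*1) := by positivity
        linarith [norm_nonneg x]
      calc ‖x‖^2 ≤ (R * Real.sqrt (lam*1))^2 := h1
        _ = R^2 * lam := by
            rw [mul_pow, Real.sq_sqrt (by positivity : (0:ℝ) ≤ lam*1), mul_one]
    have hζ : zeta N R lam 1 = (lam + R^2/μ) ^ (-m) := zeta_eq N R lam
    have hζpos : (0:ℝ) < (lam + R^2/μ) ^ (-m) :=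
      Real.rpow_pos_of_pos (by positivity) _
    have hLle : L ≤ lam + R^2/μ := by
      rw [hL_def]
      have : ‖x‖^2/(lam*μ) ≤ R^2/μ := by
        rw [div_le_div_iff₀ (by positivity) hμ0]
        calc ‖x‖^2 * μ ≤ (R^2*lam) * μ := by nlinarith
          _ = R^2 * (lam * μ) := by ring
      linarith
    have hζa : (lam + R^2/μ) ^ (-m) ≤ L ^ (-m) :=
      Real.rpow_le_rpow_of_nonpos hL0 hLle (by linarith)
    have hVR : VR N R lam 1 x = L ^ (-m) - (lam + R^2/μ) ^ (-m) := by
      simp only [VR, if_pos hx]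
      rw [hWl, hζ]
    set b : ℝ := L ^ (-m) - (lam + R^2/μ) ^ (-m) with hb_def
    have hb0 : (0:ℝ) ≤ b := by rw [hb_def]; linarith
    have hba : b ≤ L ^ (-m) := by rw [hb_def]; linarith
    have hfb : fnl N (VR N R lam 1 x) = b ^ s := by
      rw [hVR, fnl_of_nonneg N hN hb0, hs_def]
    have hbsle : b ^ s ≤ (L ^ (-m)) ^ s := Real.rpow_le_rpow hb0 hba (by linarith)
    have habs : |fnl N (Wl N lam x) - fnl N (VR N R lam 1 x)|
        = (L ^ (-m)) ^ s - b ^ s := by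
      rw [hfa, hfb, abs_of_nonneg (by linarith)]
    rw [habs]
    have hmvt : (L ^ (-m)) ^ s - b ^ s
        ≤ s * (L ^ (-m)) ^ (s-1) * ((lam + R^2/μ) ^ (-m)) := by
      have := rpow_sub_rpow_le hb0 hba hs1
      have hab : L ^ (-m) - b = (lam + R^2/μ) ^ (-m) := by rw [hb_def]; ring
      rw [hab] at this; exact this
    have has1 : (L ^ (-m)) ^ (s-1) = L ^ (-(2:ℝ)) := by
      rw [← Real.rpow_mul hL0.le]
      congr 1
      have : -m * (s-1) = -(m*(s-1)) := by ring
      rw [this, hms1]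
    have hζle : (lam + R^2/μ) ^ (-m) ≤ μ ^ ((n+2)/2) := by
      have h1 : (1:ℝ)/μ ≤ lam + R^2/μ := by
        have : (1:ℝ)/μ ≤ R^2/μ := by
          apply div_le_div_of_nonneg_right ?_ hμ0.le; nlinarith
        linarith
      have h2 : (lam + R^2/μ) ^ (-m) ≤ ((1:ℝ)/μ) ^ (-m) :=
        Real.rpow_le_rpow_of_nonpos (by positivity) h1 (by linarith)
      have h3 : ((1:ℝ)/μ) ^ (-m) = μ ^ m := by
        rw [one_div, Real.rpow_neg (inv_nonneg.2 hμ0.le), Real.inv_rpow hμ0.le, inv_inv]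
      have h4 : μ ^ m ≤ μ ^ ((n+2)/2) :=
        Real.rpow_le_rpow_of_exponent_le (by linarith) (by rw [hm_def]; linarith)
      calc (lam + R^2/μ) ^ (-m) ≤ ((1:ℝ)/μ) ^ (-m) := h2
        _ = μ ^ m := h3
        _ ≤ μ ^ ((n+2)/2) := h4
    have hL2 : L ^ (-(2:ℝ)) = L ^ (k-2) * L ^ (-k) := by
      rw [← Real.rpow_add hL0]; ring_nf
    have hLleR : L ≤ 1 + R^2 := by
      have hd : R^2/μ ≤ R^2 := div_le_self (by positivity) (by linarith)
      calc L ≤ lam + R^2/μ := hLle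
        _ ≤ 1 + R^2 := by linarith
    have hLkR : L ^ (k-2) ≤ (1+R^2) ^ k := by
      calc L ^ (k-2) ≤ (1+R^2) ^ (k-2) :=
            Real.rpow_le_rpow hL0.le hLleR (by linarith)
        _ ≤ (1+R^2) ^ k :=
            Real.rpow_le_rpow_of_exponent_le (by nlinarith) (by linarith)
    calc (L ^ (-m)) ^ s - b ^ s
        ≤ s * (L ^ (-m)) ^ (s-1) * ((lam + R^2/μ) ^ (-m)) := hmvt
      _ = s * ((lam + R^2/μ) ^ (-m)) * L ^ (k-2) * L ^ (-k) := by
          rw [has1, hL2]; ring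
      _ ≤ 5 * μ ^ ((n+2)/2) * (1+R^2) ^ k * L ^ (-k) := by
          apply mul_le_mul_of_nonneg_right _ hLk
          have h5 : s * ((lam + R^2/μ) ^ (-m)) ≤ 5 * μ ^ ((n+2)/2) := by
            apply mul_le_mul hs5 hζle hζpos.le (by norm_num)
          calc s * ((lam + R^2/μ) ^ (-m)) * L ^ (k-2)
              ≤ (5 * μ ^ ((n+2)/2)) * ((1+R^2) ^ k) := by
                apply mul_le_mul h5 hLkR (Real.rpow_nonneg hL0.le _)
                positivity
            _ = 5 * μ ^ ((n+2)/2) * (1+R^2) ^ k := by ring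
  · -- outer region
    have hVR : VR N R lam 1 x = 0 := by simp only [VR, if_neg hx]
    have hf0 : fnl N (0:ℝ) = 0 := by simp [fnl]
    have hx2 : R^2 * lam ≤ ‖x‖^2 := by
      push_neg at hx
      have h0 : (0:ℝ) ≤ R * Real.sqrt (lam*1) := by positivity
      have := sq_le_sq' (by linarith : -‖x‖ ≤ R * Real.sqrt (lam*1)) hx.le
      calc R^2*lam = (R * Real.sqrt (lam*1))^2 := by
            rw [mul_pow, Real.sq_sqrt (by positivity : (0:ℝ) ≤ lam*1), mul_one]
        _ ≤ ‖x‖^2 := this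
    have hLge : (1:ℝ)/μ ≤ L := by
      have h1 : R^2/μ ≤ ‖x‖^2/(lam*μ) := by
        rw [div_le_div_iff₀ hμ0 (by positivity)]
        calc R^2 * (lam*μ) = (R^2*lam)*μ := by ring
          _ ≤ ‖x‖^2 * μ := by nlinarith
      have h2 : (1:ℝ)/μ ≤ R^2/μ := by
        apply div_le_div_of_nonneg_right ?_ hμ0.le; nlinarith
      rw [hL_def]; linarith
    rw [hVR, hf0, sub_zero, hfa, abs_of_nonneg (Real.rpow_nonneg ha0.le _), has]
    have hsplit : L ^ (-(m*s)) = L ^ (k - (n+2)/2) * L ^ (-k) := by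
      rw [← Real.rpow_add hL0, hms]; ring_nf
    have hstep : L ^ (k - (n+2)/2) ≤ μ ^ ((n+2)/2) := by
      have h2 : L ^ (k-(n+2)/2) ≤ ((1:ℝ)/μ) ^ (k-(n+2)/2) :=
        Real.rpow_le_rpow_of_nonpos (by positivity) hLge (by linarith)
      have h3 : ((1:ℝ)/μ) ^ (k-(n+2)/2) = μ ^ ((n+2)/2 - k) := by
        rw [one_div, ← Real.rpow_neg_one μ, ← Real.rpow_mul hμ0.le]
        congr 1; ring
      have h4 : μ ^ ((n+2)/2 - k) ≤ μ ^ ((n+2)/2) :=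
        Real.rpow_le_rpow_of_exponent_le (by linarith) (by linarith)
      calc L ^ (k - (n+2)/2) ≤ ((1:ℝ)/μ) ^ (k-(n+2)/2) := h2
        _ = μ ^ ((n+2)/2 - k) := h3
        _ ≤ μ ^ ((n+2)/2) := h4
    calc L ^ (-(m*s)) = L ^ (k - (n+2)/2) * L ^ (-k) := hsplit
      _ ≤ μ ^ ((n+2)/2) * L ^ (-k) := by
          apply mul_le_mul_of_nonneg_right hstep hLk
      _ ≤ 5 * μ ^ ((n+2)/2) * (1+R^2) ^ k * L ^ (-k) := by
          have : μ ^ ((n+2)/2) ≤ 5 * μ ^ ((n+2)/2) * (1+R^2) ^ k := by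
            nlinarith [hμpow, hCk]
          apply mul_le_mul_of_nonneg_right this hLk

lemma integrable_gq (N : ℕ) (hN : 3 ≤ N) {q : ℝ} (hq : (N:ℝ) < 2*q) :
    Integrable (fun y : EuclideanSpace ℝ (Fin N) =>
      (1 + ‖y‖^2 / ((N:ℝ)*((N:ℝ)-2))) ^ (-q)) := by
  have hn : (3:ℝ) ≤ (N:ℝ) := by exact_mod_cast hN
  have hμ0 : (0:ℝ) < (N:ℝ)*((N:ℝ)-2) := by nlinarith
  have hμ1 : (1:ℝ) ≤ (N:ℝ)*((N:ℝ)-2) := by nlinarith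
  have hq0 : (0:ℝ) < q := by linarith
  set μ : ℝ := (N:ℝ)*((N:ℝ)-2) with hmu_def
  have base : Integrable (fun y : EuclideanSpace ℝ (Fin N) => ((1:ℝ) + ‖y‖^2) ^ (-(2*q)/2)) volume :=
    integrable_rpow_neg_one_add_norm_sq (by rw [finrank_euclideanSpace_fin]; exact hq)
  have hexp : -(2*q)/2 = -q := by ring
  rw [hexp] at base
  have hμq : (0:ℝ) < μ ^ q := Real.rpow_pos_of_pos hμ0 _
  apply Integrable.mono' (base.const_mul (μ ^ q))
  · apply Continuous.aestronglyMeasurable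
    apply Continuous.rpow_const
    · continuity
    · intro y
      left
      have h1 : (0:ℝ) ≤ ‖y‖^2/μ := div_nonneg (sq_nonneg _) hμ0.le
      intro h0; nlinarith
  · apply Eventually.of_forall
    intro y
    have hY : (0:ℝ) ≤ ‖y‖^2 := sq_nonneg _
    have hb0 : (0:ℝ) < 1 + ‖y‖^2/μ := by
      have h1 : (0:ℝ) ≤ ‖y‖^2/μ := div_nonneg hY hμ0.le
      linarith
    rw [Real.norm_eq_abs, abs_of_pos (Real.rpow_pos_of_pos hb0 _)]
    have h2 : (1 + ‖y‖^2)/μ ≤ 1 + ‖y‖^2/μ := by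
      rw [add_div]
      have : (1:ℝ)/μ ≤ 1 := by
        rw [div_le_one hμ0]; linarith
      linarith
    have h3 : (1 + ‖y‖^2/μ) ^ (-q) ≤ ((1 + ‖y‖^2)/μ) ^ (-q) :=
      Real.rpow_le_rpow_of_nonpos (by positivity) h2 (by linarith)
    have h4 : ((1 + ‖y‖^2)/μ) ^ (-q) = μ ^ q * (1 + ‖y‖^2) ^ (-q) := by
      rw [Real.div_rpow (by linarith) hμ0.le, Real.rpow_neg hμ0.le]
      field_simp
    rw [h4] at h3
    exact h3
set_option maxHeartbeats 1000000 in
lemma integral_bound (N : ℕ) (hN : 3 ≤ N) (R : ℝ) (hR : 1 ≤ R) {lam : ℝ}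
    (hl : 0 < lam) (hl1 : lam ≤ 1) :
    (∫ x : EuclideanSpace ℝ (Fin N),
        |fnl N (Wl N lam x) - fnl N (VR N R lam 1 x)| ^ (2*(N:ℝ)/((N:ℝ)+2)))
      ≤ (5 * ((N:ℝ)*((N:ℝ)-2)) ^ (((N:ℝ)+2)/2) * (1+R^2) ^ (max 2 (((N:ℝ)+4)/4)))
          ^ (2*(N:ℝ)/((N:ℝ)+2))
        * lam ^ ((N:ℝ) - (max 2 (((N:ℝ)+4)/4)) * (2*(N:ℝ)/((N:ℝ)+2)))
        * ∫ y : EuclideanSpace ℝ (Fin N),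
            (1 + ‖y‖^2/((N:ℝ)*((N:ℝ)-2)))
              ^ (-((max 2 (((N:ℝ)+4)/4)) * (2*(N:ℝ)/((N:ℝ)+2)))) := by
  have hn : (3:ℝ) ≤ (N:ℝ) := by exact_mod_cast hN
  have hn2 : (0:ℝ) < (N:ℝ) - 2 := by linarith
  set n : ℝ := (N:ℝ) with hn_def
  set μ : ℝ := n*(n-2) with hmu_def
  have hμ0 : (0:ℝ) < μ := by rw [hmu_def]; nlinarith
  set k : ℝ := max 2 ((n+4)/4) with hk_def
  have hk2 : (2:ℝ) ≤ k := le_max_left _ _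
  set p : ℝ := 2*n/(n+2) with hp_def
  have hp0 : (0:ℝ) < p := div_pos (by linarith) (by linarith)
  set q : ℝ := k*p with hq_def
  have hq2 : n < 2*q := by
    have hkq : (n+2)/4 < k := lt_of_lt_of_le (by linarith) (le_max_right _ _)
    have hid : (n+2)/2 * p = n := by rw [hp_def]; field_simp
    nlinarith
  set C : ℝ := 5 * μ^((n+2)/2) * (1+R^2)^k with hC_def
  have hC0 : (0:ℝ) < C := by
    have h1 := Real.rpow_pos_of_pos hμ0 ((n+2)/2)
    have h2 := Real.rpow_pos_of_pos (show (0:ℝ) < 1+R^2 by nlinarith) k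
    rw [hC_def]; nlinarith
  have hgint : Integrable (fun y : EuclideanSpace ℝ (Fin N) => (1 + ‖y‖^2/μ) ^ (-q)) :=
    integrable_gq N hN hq2
  set J : ℝ := ∫ y : EuclideanSpace ℝ (Fin N), (1 + ‖y‖^2/μ) ^ (-q) with hJ_def
  have hpt : ∀ x : EuclideanSpace ℝ (Fin N),
      |fnl N (Wl N lam x) - fnl N (VR N R lam 1 x)| ^ p
        ≤ C^p * (lam^(-q) * (1 + ‖lam⁻¹ • x‖^2/μ) ^ (-q)) := by
    intro x
    have h1 : |fnl N (Wl N lam x) - fnl N (VR N R lam 1 x)|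
        ≤ C * (lam + ‖x‖^2/(lam*μ)) ^ (-k) := pointwise_bound N hN R hR hl hl1 x
    set L : ℝ := lam + ‖x‖^2/(lam*μ) with hL_def
    have hL0 : (0:ℝ) < L := by
      have h0 : (0:ℝ) ≤ ‖x‖^2/(lam*μ) := div_nonneg (sq_nonneg _) (mul_nonneg hl.le hμ0.le)
      rw [hL_def]; linarith
    have hb2 : (0:ℝ) ≤ 1 + ‖lam⁻¹ • x‖^2/μ := by
      have h0 : (0:ℝ) ≤ ‖lam⁻¹ • x‖^2/μ := div_nonneg (sq_nonneg _) hμ0.le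
      linarith
    have h2 : |fnl N (Wl N lam x) - fnl N (VR N R lam 1 x)| ^ p ≤ (C * L^(-k))^p :=
      Real.rpow_le_rpow (abs_nonneg _) h1 hp0.le
    have h3 : (C * L^(-k))^p = C^p * L^(-q) := by
      rw [Real.mul_rpow hC0.le (Real.rpow_nonneg hL0.le _), ← Real.rpow_mul hL0.le]
      rw [show -k*p = -q by rw [hq_def]; ring]
    have h4 : L^(-q) = lam^(-q) * (1 + ‖lam⁻¹ • x‖^2/μ)^(-q) := by
      have hsp : L = lam * (1 + ‖lam⁻¹ • x‖^2/μ) := by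
        rw [hL_def, norm_smul, Real.norm_eq_abs, abs_of_pos (inv_pos.2 hl)]
        field_simp
      rw [hsp, Real.mul_rpow hl.le hb2]
    rw [h3, h4] at h2
    exact h2
  have hrint : Integrable (fun x : EuclideanSpace ℝ (Fin N) =>
      C^p * (lam^(-q) * (1 + ‖lam⁻¹ • x‖^2/μ)^(-q))) := by
    have h1 : Integrable (fun x : EuclideanSpace ℝ (Fin N) =>
        (1 + ‖lam⁻¹ • x‖^2/μ)^(-q)) := hgint.comp_smul (inv_ne_zero hl.ne')
    exact (h1.const_mul _).const_mul _
  have hmono : (∫ x : EuclideanSpace ℝ (Fin N),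
        |fnl N (Wl N lam x) - fnl N (VR N R lam 1 x)| ^ p)
      ≤ ∫ x : EuclideanSpace ℝ (Fin N),
          C^p * (lam^(-q) * (1 + ‖lam⁻¹ • x‖^2/μ)^(-q)) :=
    integral_mono_of_nonneg
      (Eventually.of_forall fun x => Real.rpow_nonneg (abs_nonneg _) _)
      hrint (Eventually.of_forall hpt)
  have hcomp : (∫ x : EuclideanSpace ℝ (Fin N), (1 + ‖lam⁻¹ • x‖^2/μ)^(-q))
      = lam^(N : ℕ) * J := by
    have h := MeasureTheory.Measure.integral_comp_smul
      (volume : Measure (EuclideanSpace ℝ (Fin N)))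
      (fun y : EuclideanSpace ℝ (Fin N) => (1 + ‖y‖^2/μ)^(-q)) lam⁻¹
    rw [finrank_euclideanSpace_fin, inv_pow, inv_inv, abs_of_pos (pow_pos hl N),
      smul_eq_mul] at h
    exact h
  have hval : (∫ x : EuclideanSpace ℝ (Fin N),
        C^p * (lam^(-q) * (1 + ‖lam⁻¹ • x‖^2/μ)^(-q)))
      = C^p * lam^(n - q) * J := by
    rw [integral_const_mul, integral_const_mul, hcomp]
    rw [← Real.rpow_natCast lam N]
    have : lam^(-q) * (lam^((N:ℕ):ℝ) * J) = lam^(-q) * lam^n * J := by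
      rw [hn_def]; push_cast; ring
    rw [this, ← Real.rpow_add hl, show -q + n = n - q by ring]
    ring
  rw [hval] at hmono
  exact hmono
set_option maxHeartbeats 1000000 in
lemma expr_bound (N : ℕ) (hN : 3 ≤ N) (R : ℝ) (hR : 1 ≤ R) {lam : ℝ}
    (hl : 0 < lam) (hl1 : lam < 1) :
    lam ^ (-(((N:ℝ) - 2) / 4)) *
        (∫ x : EuclideanSpace ℝ (Fin N),
            |fnl N (Wl N lam x) - fnl N (VR N R lam 1 x)| ^ (2 * (N:ℝ) / ((N:ℝ) + 2))) ^
          (((N:ℝ) + 2) / (2 * (N:ℝ)))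
      ≤ (5 * ((N:ℝ)*((N:ℝ)-2)) ^ (((N:ℝ)+2)/2) * (1+R^2) ^ (max 2 (((N:ℝ)+4)/4)))
          * (∫ y : EuclideanSpace ℝ (Fin N),
              (1 + ‖y‖^2/((N:ℝ)*((N:ℝ)-2)))
                ^ (-((max 2 (((N:ℝ)+4)/4)) * (2*(N:ℝ)/((N:ℝ)+2))))) ^ (((N:ℝ)+2)/(2*(N:ℝ)))
          * lam ^ (((N:ℝ)+6)/4 - max 2 (((N:ℝ)+4)/4)) := by
  have hn : (3:ℝ) ≤ (N:ℝ) := by exact_mod_cast hN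
  have hn2 : (0:ℝ) < (N:ℝ) - 2 := by linarith
  set n : ℝ := (N:ℝ) with hn_def
  set μ : ℝ := n*(n-2) with hmu_def
  have hμ0 : (0:ℝ) < μ := by rw [hmu_def]; nlinarith
  set k : ℝ := max 2 ((n+4)/4) with hk_def
  have hk2 : (2:ℝ) ≤ k := le_max_left _ _
  set p : ℝ := 2*n/(n+2) with hp_def
  have hp0 : (0:ℝ) < p := div_pos (by linarith) (by linarith)
  set q : ℝ := k*p with hq_def
  set C : ℝ := 5 * μ^((n+2)/2) * (1+R^2)^k with hC_def
  have hC0 : (0:ℝ) < C := by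
    have h1 := Real.rpow_pos_of_pos hμ0 ((n+2)/2)
    have h2 := Real.rpow_pos_of_pos (show (0:ℝ) < 1+R^2 by nlinarith) k
    rw [hC_def]; nlinarith
  set J : ℝ := ∫ y : EuclideanSpace ℝ (Fin N), (1 + ‖y‖^2/μ) ^ (-q) with hJ_def
  have hJ0 : (0:ℝ) ≤ J := by
    rw [hJ_def]
    apply integral_nonneg
    intro y
    apply Real.rpow_nonneg
    have h0 : (0:ℝ) ≤ ‖y‖^2/μ := div_nonneg (sq_nonneg _) hμ0.le
    linarith
  have hio0 : (0:ℝ) ≤ (n+2)/(2*n) := div_nonneg (by linarith) (by linarith)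
  have hI : (∫ x : EuclideanSpace ℝ (Fin N),
      |fnl N (Wl N lam x) - fnl N (VR N R lam 1 x)| ^ p) ≤ C^p * lam^(n - q) * J :=
    integral_bound N hN R hR hl hl1.le
  have hInn : (0:ℝ) ≤ ∫ x : EuclideanSpace ℝ (Fin N),
      |fnl N (Wl N lam x) - fnl N (VR N R lam 1 x)| ^ p :=
    integral_nonneg fun x => Real.rpow_nonneg (abs_nonneg _) _
  have h2 : (∫ x : EuclideanSpace ℝ (Fin N),
        |fnl N (Wl N lam x) - fnl N (VR N R lam 1 x)| ^ p) ^ ((n+2)/(2*n))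
      ≤ (C^p * lam^(n-q) * J) ^ ((n+2)/(2*n)) :=
    Real.rpow_le_rpow hInn hI hio0
  have hsplit : (C^p * lam^(n-q) * J) ^ ((n+2)/(2*n))
      = C * lam^((n-q)*((n+2)/(2*n))) * J^((n+2)/(2*n)) := by
    rw [Real.mul_rpow (mul_nonneg (Real.rpow_nonneg hC0.le p) (Real.rpow_nonneg hl.le _)) hJ0,
        Real.mul_rpow (Real.rpow_nonneg hC0.le p) (Real.rpow_nonneg hl.le _),
        ← Real.rpow_mul hC0.le, ← Real.rpow_mul hl.le]
    rw [show p*((n+2)/(2*n)) = 1 by rw [hp_def]; field_simp, Real.rpow_one]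
  rw [hsplit] at h2
  have h3 : lam ^ (-((n - 2) / 4)) *
      ((∫ x : EuclideanSpace ℝ (Fin N),
        |fnl N (Wl N lam x) - fnl N (VR N R lam 1 x)| ^ p) ^ ((n+2)/(2*n)))
      ≤ lam ^ (-((n - 2) / 4)) * (C * lam^((n-q)*((n+2)/(2*n))) * J^((n+2)/(2*n))) :=
    mul_le_mul_of_nonneg_left h2 (Real.rpow_nonneg hl.le _)
  have h4 : lam ^ (-((n - 2) / 4)) * (C * lam^((n-q)*((n+2)/(2*n))) * J^((n+2)/(2*n)))
      = C * J^((n+2)/(2*n)) * lam^((n+6)/4 - k) := by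
    have he : -((n - 2) / 4) + (n-q)*((n+2)/(2*n)) = (n+6)/4 - k := by
      rw [hq_def, hp_def]
      field_simp
      ring
    calc lam ^ (-((n - 2) / 4)) * (C * lam^((n-q)*((n+2)/(2*n))) * J^((n+2)/(2*n)))
        = C * J^((n+2)/(2*n)) * (lam ^ (-((n - 2) / 4)) * lam^((n-q)*((n+2)/(2*n)))) := by ring
      _ = C * J^((n+2)/(2*n)) * lam^((n+6)/4 - k) := by
          rw [← Real.rpow_add hl, he]
  rw [h4] at h3
  calc lam ^ (-((n - 2) / 4)) *
      (∫ x : EuclideanSpace ℝ (Fin N),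
        |fnl N (Wl N lam x) - fnl N (VR N R lam 1 x)| ^ p) ^ ((n+2)/(2*n))
      ≤ C * J^((n+2)/(2*n)) * lam^((n+6)/4 - k) := h3
    _ = C * J^((n+2)/(2*n)) * lam^((n+6)/4 - k) := rfl

theorem f_of_truncation_dual_norm_small (N : ℕ) (hN : 3 ≤ N) (R : ℝ) (hR : 1 ≤ R) :
    Tendsto (fun lam : ℝ =>
        lam ^ (-(((N : ℝ) - 2) / 4)) *
          (∫ x : EuclideanSpace ℝ (Fin N),
              |fnl N (Wl N lam x) - fnl N (VR N R lam 1 x)| ^ (2 * (N : ℝ) / ((N : ℝ) + 2))) ^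
            (((N : ℝ) + 2) / (2 * (N : ℝ))))
      (nhdsWithin 0 (Set.Ioi 0)) (nhds 0) := by
  have hn : (3:ℝ) ≤ (N:ℝ) := by exact_mod_cast hN
  have hε0 : (0:ℝ) < ((N:ℝ)+6)/4 - max 2 (((N:ℝ)+4)/4) := by
    have h1 : max 2 (((N:ℝ)+4)/4) < ((N:ℝ)+6)/4 :=
      max_lt (by linarith) (by linarith)
    linarith
  apply squeeze_zero' (g := fun lam : ℝ =>
    (5 * ((N:ℝ)*((N:ℝ)-2)) ^ (((N:ℝ)+2)/2) * (1+R^2) ^ (max 2 (((N:ℝ)+4)/4)))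
      * (∫ y : EuclideanSpace ℝ (Fin N),
          (1 + ‖y‖^2/((N:ℝ)*((N:ℝ)-2)))
            ^ (-((max 2 (((N:ℝ)+4)/4)) * (2*(N:ℝ)/((N:ℝ)+2))))) ^ (((N:ℝ)+2)/(2*(N:ℝ)))
      * lam ^ (((N:ℝ)+6)/4 - max 2 (((N:ℝ)+4)/4)))
  · filter_upwards [self_mem_nhdsWithin] with lam hlam
    exact mul_nonneg (Real.rpow_nonneg (le_of_lt hlam) _)
      (Real.rpow_nonneg (integral_nonneg fun x => Real.rpow_nonneg (abs_nonneg _) _) _)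
  · filter_upwards [Ioo_mem_nhdsGT_of_mem
      (Set.mem_Ico.2 ⟨le_refl (0:ℝ), zero_lt_one⟩)] with lam hlam
    exact expr_bound N hN R hR hlam.1 hlam.2
  · have h1 : Tendsto (fun lam : ℝ =>
        lam ^ (((N:ℝ)+6)/4 - max 2 (((N:ℝ)+4)/4))) (nhdsWithin 0 (Set.Ioi 0)) (nhds 0) := by
      have h2 := (Real.continuousAt_rpow_const 0
        (((N:ℝ)+6)/4 - max 2 (((N:ℝ)+4)/4)) (Or.inr hε0.le)).tendsto
      rw [Real.zero_rpow hε0.ne'] at h2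
      exact h2.mono_left nhdsWithin_le_nhds
    have h3 := h1.const_mul
      ((5 * ((N:ℝ)*((N:ℝ)-2)) ^ (((N:ℝ)+2)/2) * (1+R^2) ^ (max 2 (((N:ℝ)+4)/4)))
        * (∫ y : EuclideanSpace ℝ (Fin N),
            (1 + ‖y‖^2/((N:ℝ)*((N:ℝ)-2)))
              ^ (-((max 2 (((N:ℝ)+4)/4)) * (2*(N:ℝ)/((N:ℝ)+2))))) ^ (((N:ℝ)+2)/(2*(N:ℝ))))
    simpa using h3
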